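/- Fix s ∈ ℂ. For g = [[a, b], [c, d]] ∈ SL₂(ℂ) and z ∈ ℂ with cz + d ≠ 0, define g.z := (az + b)/(cz + d) and ψ_g(z, ξ) := (cz + d)²ξ − s·c·(cz + d) for ξ ∈ ℂ. Then for all g = [[a, b], [c, d]], h = [[a', b'], [c', d']] ∈ SL₂(ℂ) and z, ξ ∈ ℂ such that c'z + d' ≠ 0 and c·(h.z) + d ≠ 0, one has ψ_g(h.z, ψ_h(z, ξ)) = ψ_{gh}(z, ξ). -/

import Mathlib

open Matrix

/-- The Möbius action of a `2×2` matrix `[[a, b], [c, d]]` on `ℂ`: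
`g.z = (az + b)/(cz + d)`. -/
noncomputable def moebius (m : Matrix (Fin 2) (Fin 2) ℂ) (z : ℂ) : ℂ :=
  (m 0 0 * z + m 0 1) / (m 1 0 * z + m 1 1)

/-- The `λ`-twisted affine fiber transformation on cotangent vectors:
`ψ_g(z, ξ) = (cz + d)²ξ − s·c·(cz + d)` for `g = [[a, b], [c, d]]`. -/
def psiTwist (s : ℂ) (m : Matrix (Fin 2) (Fin 2) ℂ) (z ξ : ℂ) : ℂ :=
  (m 1 0 * z + m 1 1) ^ 2 * ξ - s * (m 1 0) * (m 1 0 * z + m 1 1)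

/-- Cocycle property `ψ_g(h.z, ψ_h(z, ξ)) = ψ_{gh}(z, ξ)` of the twisted affine
fiber transformation for `SL₂(ℂ)`. -/
theorem psiTwist_cocycle (s : ℂ) (g h : Matrix.SpecialLinearGroup (Fin 2) ℂ)
    (z ξ : ℂ)
    (hh : (h : Matrix (Fin 2) (Fin 2) ℂ) 1 0 * z +
      (h : Matrix (Fin 2) (Fin 2) ℂ) 1 1 ≠ 0)
    (hg : (g : Matrix (Fin 2) (Fin 2) ℂ) 1 0 *
        moebius (h : Matrix (Fin 2) (Fin 2) ℂ) z +
      (g : Matrix (Fin 2) (Fin 2) ℂ) 1 1 ≠ 0) :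
    psiTwist s (g : Matrix (Fin 2) (Fin 2) ℂ)
        (moebius (h : Matrix (Fin 2) (Fin 2) ℂ) z)
        (psiTwist s (h : Matrix (Fin 2) (Fin 2) ℂ) z ξ) =
      psiTwist s ((g * h : Matrix.SpecialLinearGroup (Fin 2) ℂ) :
        Matrix (Fin 2) (Fin 2) ℂ) z ξ := by
  rw [Matrix.SpecialLinearGroup.coe_mul]
  obtain ⟨gm, hgdet⟩ := g
  obtain ⟨hm, hhdet⟩ := h
  simp only [Matrix.SpecialLinearGroup.coe_mul] at *
  rw [Matrix.det_fin_two] at hhdet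
  simp only [psiTwist, moebius, Matrix.mul_apply, Fin.sum_univ_two] at *
  have hN : (gm 1 0 * hm 0 0 + gm 1 1 * hm 1 0) * z + (gm 1 0 * hm 0 1 + gm 1 1 * hm 1 1) ≠ 0 := by
    intro h0
    apply hg
    rw [mul_div_assoc', div_add' _ _ _ hh, div_eq_zero_iff]
    left
    linear_combination h0
  have hh' : z * hm 1 0 + hm 1 1 ≠ 0 := by rwa [mul_comm]
  field_simp
  linear_combination (s * gm 1 0 * ((gm 1 0 * hm 0 0 + gm 1 1 * hm 1 0) * z + (gm 1 0 * hm 0 1 + gm 1 1 * hm 1 1))) * hhdet
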